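/- Minimal ellipse circumscribing a parallelogram: let a, c > 0 and let A, B, C, D, E, F be real numbers with A > 0 and A·C − B² > 0 such that Q(x,y) = A·x² + 2B·x·y + C·y² + 2D·x + 2E·y + F vanishes at the four points (a,0), (−a,0), (0,c), (0,−c). Then the two-dimensional Lebesgue measure of {(x,y) ∈ ℝ² : Q(x,y) ≤ 0} is at least π·a·c, with equality if and only if B = 0. (Thus the minimal circumscribing ellipse has area (π/2) times the area 2·a·c of the quadrilateral with vertices (±a,0), (0,±c).) -/

import Mathlib

open MeasureTheory

/-- The shear-and-scale linear map `(x, y) ↦ (s·x + u·y, t·y)`. -/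
noncomputable def ellT (s u t : ℝ) : ℝ × ℝ →ₗ[ℝ] ℝ × ℝ where
  toFun p := (s * p.1 + u * p.2, t * p.2)
  map_add' p q := by simp [Prod.ext_iff]; constructor <;> ring
  map_smul' r p := by simp [Prod.ext_iff, smul_eq_mul]; constructor <;> ring

lemma ellT_det (s u t : ℝ) : LinearMap.det (ellT s u t) = s * t := by
  rw [← LinearMap.det_toMatrix (Module.Basis.finTwoProd ℝ), Matrix.det_fin_two]
  simp [LinearMap.toMatrix_apply, ellT]

lemma unit_disk_vol : volume {p : ℝ × ℝ | p.1 ^ 2 + p.2 ^ 2 ≤ 1} = NNReal.pi := by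
  have h : Complex.measurableEquivRealProd ⁻¹' {p : ℝ × ℝ | p.1 ^ 2 + p.2 ^ 2 ≤ 1}
      = Metric.closedBall (0 : ℂ) 1 := by
    ext z
    simp only [Set.mem_preimage, Complex.measurableEquivRealProd_apply, Set.mem_setOf_eq,
      Metric.mem_closedBall, Complex.dist_eq, sub_zero]
    rw [Complex.norm_def, Complex.normSq_apply, Real.sqrt_le_one]
    constructor <;> intro hz <;> nlinarith
  have hm : MeasurableSet {p : ℝ × ℝ | p.1 ^ 2 + p.2 ^ 2 ≤ 1} := by
    apply measurableSet_le <;> fun_prop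
  rw [← Complex.volume_preserving_equiv_real_prod.measure_preimage hm.nullMeasurableSet, h,
    Complex.volume_closedBall]
  simp

/-- Area of the ellipse `{(x,y) : A·x² + 2B·x·y + C·y² ≤ R}`. -/
lemma ellipse_vol (A B C R : ℝ) (hA : 0 < A) (hd : 0 < A * C - B ^ 2) (hR : 0 < R) :
    volume {p : ℝ × ℝ | A * p.1 ^ 2 + 2 * B * p.1 * p.2 + C * p.2 ^ 2 ≤ R}
      = ENNReal.ofReal (R / Real.sqrt (A * C - B ^ 2)) * NNReal.pi := by
  set s : ℝ := Real.sqrt (A / R) with hs_def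
  set u : ℝ := B / Real.sqrt (A * R) with hu_def
  set t : ℝ := Real.sqrt ((A * C - B ^ 2) / (A * R)) with ht_def
  have hAR : (0:ℝ) < A * R := by positivity
  have hs : 0 < s := Real.sqrt_pos.2 (by positivity)
  have ht : 0 < t := Real.sqrt_pos.2 (by positivity)
  have hs2 : s ^ 2 = A / R := Real.sq_sqrt (by positivity)
  have ht2 : t ^ 2 = (A * C - B ^ 2) / (A * R) := Real.sq_sqrt (by positivity)
  have hu2 : u ^ 2 = B ^ 2 / (A * R) := by
    rw [hu_def, div_pow, Real.sq_sqrt hAR.le]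
  have hq : s / Real.sqrt (A * R) = 1 / R := by
    have h1 : (s / Real.sqrt (A * R)) ^ 2 = (1 / R) ^ 2 := by
      rw [div_pow, hs2, Real.sq_sqrt hAR.le]
      field_simp
    exact (sq_eq_sq₀ (by positivity) (by positivity)).1 h1
  have hsu : s * u = B / R := by
    rw [hu_def, mul_div_assoc', mul_comm s B, mul_div_assoc, hq]
    ring
  have hut : u ^ 2 + t ^ 2 = C / R := by
    rw [hu2, ht2]
    field_simp
    ring
  have hset : {p : ℝ × ℝ | A * p.1 ^ 2 + 2 * B * p.1 * p.2 + C * p.2 ^ 2 ≤ R}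
      = (ellT s u t) ⁻¹' {p : ℝ × ℝ | p.1 ^ 2 + p.2 ^ 2 ≤ 1} := by
    ext p
    simp only [Set.mem_setOf_eq, Set.mem_preimage, ellT, LinearMap.coe_mk, AddHom.coe_mk]
    have key : (s * p.1 + u * p.2) ^ 2 + (t * p.2) ^ 2
        = (A * p.1 ^ 2 + 2 * B * p.1 * p.2 + C * p.2 ^ 2) / R := by
      have expand : (s * p.1 + u * p.2) ^ 2 + (t * p.2) ^ 2
          = s ^ 2 * p.1 ^ 2 + 2 * (s * u) * (p.1 * p.2) + (u ^ 2 + t ^ 2) * p.2 ^ 2 := by ring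
      rw [expand, hs2, hsu, hut]
      field_simp
    rw [key, div_le_one hR]
  have hdet : LinearMap.det (ellT s u t) ≠ 0 := by
    rw [ellT_det]; positivity
  rw [hset, Measure.addHaar_preimage_linearMap volume hdet, ellT_det, unit_disk_vol]
  congr 1
  have hst : s * t = Real.sqrt (A * C - B ^ 2) / R := by
    have h1 : (s * t) ^ 2 = (Real.sqrt (A * C - B ^ 2) / R) ^ 2 := by
      rw [mul_pow, hs2, ht2, div_pow, Real.sq_sqrt hd.le]
      field_simp
    exact (sq_eq_sq₀ (mul_pos hs ht).le (by positivity)).1 h1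
  rw [abs_inv, abs_of_pos (mul_pos hs ht), hst, inv_div]

/-- E691 §§13–15: amongst all ellipses
`{(x,y) : A·x² + 2B·x·y + C·y² + 2D·x + 2E·y + F ≤ 0}` passing through the four
vertices `(±a, 0)`, `(0, ±c)` of a parallelogram, the area is at least `π·a·c`,
with equality if and only if `B = 0`. -/
theorem euler_min_area_parallelogram (a c A B C D E F : ℝ)
    (ha : 0 < a) (hc : 0 < c) (hA : 0 < A) (hdisc : 0 < A * C - B ^ 2)
    (hQ : ∀ p : ℝ × ℝ,
      (p = (a, 0) ∨ p = (-a, 0) ∨ p = (0, c) ∨ p = (0, -c)) →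
      A * p.1 ^ 2 + 2 * B * p.1 * p.2 + C * p.2 ^ 2 + 2 * D * p.1 + 2 * E * p.2 + F = 0) :
    ENNReal.ofReal (Real.pi * a * c) ≤
      MeasureTheory.volume
        {p : ℝ × ℝ | A * p.1 ^ 2 + 2 * B * p.1 * p.2 + C * p.2 ^ 2
          + 2 * D * p.1 + 2 * E * p.2 + F ≤ 0} ∧
    (MeasureTheory.volume
        {p : ℝ × ℝ | A * p.1 ^ 2 + 2 * B * p.1 * p.2 + C * p.2 ^ 2
          + 2 * D * p.1 + 2 * E * p.2 + F ≤ 0}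
        = ENNReal.ofReal (Real.pi * a * c) ↔ B = 0) := by
  have h1 := hQ (a, 0) (Or.inl rfl)
  have h2 := hQ (-a, 0) (Or.inr (Or.inl rfl))
  have h3 := hQ (0, c) (Or.inr (Or.inr (Or.inl rfl)))
  have h4 := hQ (0, -c) (Or.inr (Or.inr (Or.inr rfl)))
  simp only [Prod.fst, Prod.snd] at h1 h2 h3 h4
  norm_num at h1 h2 h3 h4
  have hD : D = 0 := by
    have hDa : D * a = 0 := by nlinarith
    exact (mul_eq_zero.mp hDa).resolve_right ha.ne'
  have hE : E = 0 := by
    have hEc : E * c = 0 := by nlinarith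
    exact (mul_eq_zero.mp hEc).resolve_right hc.ne'
  have hF : F = -(A * a ^ 2) := by nlinarith
  have hCc : C * c ^ 2 = A * a ^ 2 := by nlinarith
  have hsets : {p : ℝ × ℝ | A * p.1 ^ 2 + 2 * B * p.1 * p.2 + C * p.2 ^ 2
          + 2 * D * p.1 + 2 * E * p.2 + F ≤ 0}
      = {p : ℝ × ℝ | A * p.1 ^ 2 + 2 * B * p.1 * p.2 + C * p.2 ^ 2 ≤ A * a ^ 2} := by
    ext p
    simp only [Set.mem_setOf_eq, hD, hE, hF]
    constructor <;> intro <;> linarith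
  rw [hsets, ellipse_vol A B C (A * a ^ 2) hA hdisc (by positivity)]
  set sd : ℝ := Real.sqrt (A * C - B ^ 2) with hsd_def
  have hsd : 0 < sd := Real.sqrt_pos.2 hdisc
  have hsd2 : sd ^ 2 = A * C - B ^ 2 := Real.sq_sqrt hdisc.le
  have hpi : (NNReal.pi : ENNReal) = ENNReal.ofReal Real.pi := by
    rw [← NNReal.coe_real_pi, ENNReal.ofReal_coe_nnreal]
  have hcomb : ENNReal.ofReal (A * a ^ 2 / sd) * NNReal.pi
      = ENNReal.ofReal (Real.pi * (A * a ^ 2 / sd)) := by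
    rw [hpi, ENNReal.ofReal_mul Real.pi_pos.le, mul_comm]
  rw [hcomb]
  have hsdc : sd * c ≤ A * a := by
    have h5 : sd ≤ A * a / c := by
      rw [show A * a / c = Real.sqrt ((A * a / c) ^ 2) from
        (Real.sqrt_sq (by positivity)).symm]
      apply Real.sqrt_le_sqrt
      rw [div_pow]
      rw [le_div_iff₀ (by positivity)]
      nlinarith
    rw [← le_div_iff₀ hc]
    exact h5
  constructor
  · apply ENNReal.ofReal_le_ofReal
    rw [mul_assoc, mul_le_mul_iff_right₀ Real.pi_pos, le_div_iff₀ hsd]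
    nlinarith
  · rw [ENNReal.ofReal_eq_ofReal_iff (by positivity) (by positivity)]
    constructor
    · intro heq
      have h6 : A * a ^ 2 / sd = a * c := by
        have := mul_left_cancel₀ Real.pi_ne_zero
          (by linarith [heq] : Real.pi * (A * a ^ 2 / sd) = Real.pi * (a * c))
        linarith
      have hcsd : c * sd = A * a := by
        rw [div_eq_iff hsd.ne'] at h6
        have : a * (c * sd) = a * (A * a) := by ring_nf; ring_nf at h6; linarith
        exact mul_left_cancel₀ ha.ne' this
      have hB2c : B ^ 2 * c ^ 2 = 0 := by
        linear_combination A * hCc + c ^ 2 * hsd2 - (c * sd + A * a) * hcsd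
      have hB2 : B ^ 2 = 0 := (mul_eq_zero.mp hB2c).resolve_right (by positivity)
      exact sq_eq_zero_iff.mp hB2
    · intro hB
      subst hB
      have hsd_eq : sd = A * a / c := by
        rw [hsd_def]
        rw [show A * C - 0 ^ 2 = (A * a / c) ^ 2 by field_simp; nlinarith]
        exact Real.sqrt_sq (by positivity)
      rw [hsd_eq]
      field_simp
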